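/- Let ρ be a quantum state on a finite-dimensional Hilbert space, let P_m^ρ be the spectral projector of ρ corresponding to its m largest eigenvalues (counted with multiplicity), and suppose λ_{m+1}^ρ < λ_m^ρ (a spectral gap at level m). Then for any sequence of states ρ_n converging in trace norm to ρ, the truncated operators P_m^{ρ_n} ρ_n converge in trace norm to P_m^ρ ρ. -/

import Mathlib

open scoped ComplexOrder
open Filter Topology

/-- The trace norm `‖A‖₁ = Tr √(Aᴴ A)` of a complex matrix. -/
noncomputable def traceNorm {n : Type*} [Fintype n] [DecidableEq n] (A : Matrix n n ℂ) : ℝ :=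
  ((Matrix.posSemidef_conjTranspose_mul_self A).1.eigenvectorUnitary.1 *
    Matrix.diagonal (((↑) : ℝ → ℂ) ∘ (Real.sqrt ∘ (Matrix.posSemidef_conjTranspose_mul_self A).1.eigenvalues)) *
    (star (Matrix.posSemidef_conjTranspose_mul_self A).1.eigenvectorUnitary : Matrix n n ℂ)).trace.re

/-- The spectral projector of a Hermitian matrix onto the eigenvalues exceeding `a`. -/
noncomputable def specProjAbove {n : Type*} [Fintype n] [DecidableEq n]
    {A : Matrix n n ℂ} (hA : A.IsHermitian) (a : ℝ) : Matrix n n ℂ :=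
  (hA.eigenvectorUnitary : Matrix n n ℂ) *
    Matrix.diagonal (fun i => if a < hA.eigenvalues i then (1 : ℂ) else 0) *
    star (hA.eigenvectorUnitary : Matrix n n ℂ)

/-- `Q` is the spectral projector of the Hermitian matrix `A` corresponding to its `m` largest
eigenvalues (counted with multiplicity), well defined when there is a spectral gap at level `m`:
there is a threshold `a`, not an eigenvalue, with exactly `m` eigenvalues above it. -/
def IsTopSpectralProj {n : Type*} [Fintype n] [DecidableEq n]
    {A : Matrix n n ℂ} (hA : A.IsHermitian) (m : ℕ) (Q : Matrix n n ℂ) : Prop :=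
  ∃ a : ℝ, (∀ i, hA.eigenvalues i ≠ a) ∧
    (Finset.univ.filter fun i => a < hA.eigenvalues i).card = m ∧
    Q = specProjAbove hA a


namespace Stmt19

variable {n : Type*} [Fintype n] [DecidableEq n]

lemma trace_conjDiag {U : Matrix n n ℂ} (hU : U ∈ Matrix.unitaryGroup n ℂ) (c : n → ℂ) :
    (U * Matrix.diagonal c * star U).trace = ∑ i, c i := by
  rw [Matrix.trace_mul_comm, ← mul_assoc, hU.1, one_mul, Matrix.trace_diagonal]

lemma conjDiag_mul {U : Matrix n n ℂ} (hU : U ∈ Matrix.unitaryGroup n ℂ) (c c' : n → ℂ) :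
    (U * Matrix.diagonal c * star U) * (U * Matrix.diagonal c' * star U)
      = U * Matrix.diagonal (fun i => c i * c' i) * star U := by
  have h1 : star U * (U * Matrix.diagonal c' * star U)
      = Matrix.diagonal c' * star U := by
    rw [← mul_assoc, ← mul_assoc, hU.1, one_mul]
  rw [mul_assoc (U * Matrix.diagonal c), h1, ← mul_assoc, mul_assoc U,
    Matrix.diagonal_mul_diagonal]

lemma row_norm_one {U : Matrix n n ℂ} (hU : U ∈ Matrix.unitaryGroup n ℂ) (i : n) :
    ∑ k, ‖U i k‖ ^ 2 = 1 := by
  have h2 := congrArg (fun M : Matrix n n ℂ => M i i) hU.2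
  simp only [Matrix.mul_apply, Matrix.one_apply_eq, Matrix.star_apply] at h2
  have h3 : ∀ k, U i k * star (U i k) = ((‖U i k‖ ^ 2 : ℝ) : ℂ) := by
    intro k
    rw [Complex.star_def, Complex.mul_conj, Complex.normSq_eq_norm_sq]
  rw [Finset.sum_congr rfl fun k _ => h3 k] at h2
  have h4 := congrArg Complex.re h2
  rw [Complex.re_sum] at h4
  simpa [← Complex.ofReal_pow] using h4

/-- entrywise bound for `U * diagonal c * star U`. -/
lemma entry_conjDiag_le {U : Matrix n n ℂ} (hU : U ∈ Matrix.unitaryGroup n ℂ)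
    (c : n → ℂ) (b : ℝ) (hb : ∀ k, ‖c k‖ ≤ b) (i j : n) :
    ‖(U * Matrix.diagonal c * star U) i j‖ ≤ b := by
  have hb0 : 0 ≤ b := le_trans (norm_nonneg _) (hb i)
  have hentry : (U * Matrix.diagonal c * star U) i j
      = ∑ k, U i k * c k * star (U j k) := by
    simp only [Matrix.mul_apply, Matrix.star_apply]
    refine Finset.sum_congr rfl fun k _ => ?_
    rw [Finset.sum_eq_single k (fun l _ hl => by simp [Matrix.diagonal_apply_ne _ hl]) (by simp)]
    simp [Matrix.diagonal_apply_eq]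
  rw [hentry]
  calc ‖∑ k, U i k * c k * star (U j k)‖ ≤ ∑ k, ‖U i k * c k * star (U j k)‖ :=
        norm_sum_le _ _
    _ ≤ ∑ k, ‖U i k‖ * ‖U j k‖ * b := by
        apply Finset.sum_le_sum
        intro k _
        rw [norm_mul, norm_mul, norm_star]
        calc ‖U i k‖ * ‖c k‖ * ‖U j k‖ ≤ ‖U i k‖ * b * ‖U j k‖ := by
              apply mul_le_mul_of_nonneg_right _ (norm_nonneg _)
              exact mul_le_mul_of_nonneg_left (hb k) (norm_nonneg _)
          _ = ‖U i k‖ * ‖U j k‖ * b := by ring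
    _ = (∑ k, ‖U i k‖ * ‖U j k‖) * b := by rw [Finset.sum_mul]
    _ ≤ 1 * b := by
        apply mul_le_mul_of_nonneg_right _ hb0
        have hcs := Finset.sum_mul_sq_le_sq_mul_sq Finset.univ
          (fun k => ‖U i k‖) (fun k => ‖U j k‖)
        rw [row_norm_one hU i, row_norm_one hU j, mul_one] at hcs
        have h1 : (0:ℝ) ≤ ∑ k, ‖U i k‖ * ‖U j k‖ :=
          Finset.sum_nonneg fun k _ => mul_nonneg (norm_nonneg _) (norm_nonneg _)
        nlinarith
    _ = b := one_mul b


open Polynomial in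
lemma pow_conjDiag {U : Matrix n n ℂ} (hU : U ∈ Matrix.unitaryGroup n ℂ) (c : n → ℂ) (k : ℕ) :
    (U * Matrix.diagonal c * star U) ^ k = U * Matrix.diagonal (fun i => c i ^ k) * star U := by
  induction k with
  | zero =>
    have h1 : (Matrix.diagonal fun i => c i ^ 0) = (1 : Matrix n n ℂ) := by
      simp [Matrix.diagonal_one]
    rw [pow_zero, h1, mul_one, hU.2]
  | succ k ih =>
    rw [pow_succ, ih, conjDiag_mul hU]
    simp [pow_succ]

/-- `f` applied to the Hermitian matrix `A` via its spectral decomposition. -/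
noncomputable def herm {A : Matrix n n ℂ} (hA : A.IsHermitian) (f : ℝ → ℝ) : Matrix n n ℂ :=
  (hA.eigenvectorUnitary : Matrix n n ℂ) *
    Matrix.diagonal (fun i => (f (hA.eigenvalues i) : ℂ)) *
    star (hA.eigenvectorUnitary : Matrix n n ℂ)

variable {A : Matrix n n ℂ} (hA : A.IsHermitian)

lemma herm_sub (f g : ℝ → ℝ) :
    herm hA f - herm hA g = herm hA (fun x => f x - g x) := by
  unfold herm
  rw [← Matrix.sub_mul, ← Matrix.mul_sub, Matrix.diagonal_sub]
  norm_cast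

lemma herm_trace (f : ℝ → ℝ) :
    (herm hA f).trace = ∑ i, (f (hA.eigenvalues i) : ℂ) :=
  trace_conjDiag (hA.eigenvectorUnitary).2 _

lemma herm_entry_le (f : ℝ → ℝ) (b : ℝ) (hb : ∀ i, |f (hA.eigenvalues i)| ≤ b) (i j : n) :
    ‖herm hA f i j‖ ≤ b := by
  apply entry_conjDiag_le (hA.eigenvectorUnitary).2
  intro k
  rw [Complex.norm_real]
  exact hb k

lemma hermA_pow (k : ℕ) :
    A ^ k = (hA.eigenvectorUnitary : Matrix n n ℂ) *
      Matrix.diagonal (fun i => (hA.eigenvalues i : ℂ) ^ k) *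
      star (hA.eigenvectorUnitary : Matrix n n ℂ) := by
  have h := congrArg (· ^ k) hA.spectral_theorem
  simp only [Unitary.conjStarAlgAut_apply, Unitary.coe_star] at h
  rw [h, pow_conjDiag (hA.eigenvectorUnitary).2]
  rfl

open Polynomial in
lemma aeval_eq (p : ℝ[X]) :
    Polynomial.aeval A p = herm hA (fun x => p.eval x) := by
  set U : Matrix n n ℂ := (hA.eigenvectorUnitary : Matrix n n ℂ) with hUdef
  set N := p.natDegree + 1 with hN
  rw [Polynomial.aeval_eq_sum_range]
  have hsm : ∀ (r : ℝ) (M : Matrix n n ℂ), r • M = (r : ℂ) • M := by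
    intro r M; ext i j; simp [Complex.real_smul]
  calc ∑ k ∈ Finset.range N, p.coeff k • A ^ k
      = ∑ k ∈ Finset.range N,
          U * ((p.coeff k : ℂ) • Matrix.diagonal (fun i => (hA.eigenvalues i : ℂ) ^ k)) * star U := by
        refine Finset.sum_congr rfl fun k _ => ?_
        rw [hsm, hermA_pow hA k, Matrix.mul_smul, Matrix.smul_mul]
    _ = U * (∑ k ∈ Finset.range N,
          (p.coeff k : ℂ) • Matrix.diagonal (fun i => (hA.eigenvalues i : ℂ) ^ k)) * star U := by
        rw [← Finset.sum_mul, ← Finset.mul_sum]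
    _ = herm hA (fun x => p.eval x) := by
        unfold herm
        congr 1
        congr 1
        ext i j
        rcases eq_or_ne i j with rfl | hij
        · simp only [Matrix.sum_apply, Matrix.smul_apply, Matrix.diagonal_apply_eq,
            smul_eq_mul]
          rw [Polynomial.eval_eq_sum_range]
          push_cast
          rfl
        · simp [Matrix.sum_apply, Matrix.smul_apply, Matrix.diagonal_apply_ne _ hij]

end Stmt19

namespace Stmt19
variable {n : Type*} [Fintype n] [DecidableEq n]

lemma traceNorm_key (A : Matrix n n ℂ) :
    0 ≤ traceNorm A ∧ (∀ i j, ‖A i j‖ ≤ traceNorm A) ∧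
      (traceNorm A) ^ 2 ≤ (Fintype.card n) * ∑ i, ∑ j, ‖A i j‖ ^ 2 := by
  classical
  set hQ := Matrix.posSemidef_conjTranspose_mul_self A with hQdef
  set μ : n → ℝ := fun i => Real.sqrt (hQ.1.eigenvalues i) with hmu
  have hμ0 : ∀ i, 0 ≤ μ i := fun i => Real.sqrt_nonneg _
  -- traceNorm A = ∑ μ
  have h1 : traceNorm A = ∑ i, μ i := by
    unfold traceNorm
    rw [trace_conjDiag (hQ.1.eigenvectorUnitary).2, Complex.re_sum]
    simp [Function.comp, hmu]
  -- ∑ μ² = ∑∑ ‖A i j‖²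
  have h2 : ∑ i, (μ i) ^ 2 = ∑ i, ∑ j, ‖A i j‖ ^ 2 := by
    have e0 : ∀ i, μ i ^ 2 = hQ.1.eigenvalues i := fun i => Real.sq_sqrt (hQ.eigenvalues_nonneg i)
    have e1 := congrArg (fun M : Matrix n n ℂ => M.trace.re) hQ.1.spectral_theorem
    simp only [Unitary.conjStarAlgAut_apply, Unitary.coe_star] at e1
    rw [trace_conjDiag (hQ.1.eigenvectorUnitary).2, Complex.re_sum] at e1
    have e3 : (A.conjTranspose * A).trace.re = ∑ j, ∑ i, ‖A i j‖ ^ 2 := by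
      rw [Matrix.trace]
      rw [Complex.re_sum]
      refine Finset.sum_congr rfl fun j _ => ?_
      rw [Matrix.diag_apply, Matrix.mul_apply, Complex.re_sum]
      refine Finset.sum_congr rfl fun i _ => ?_
      rw [Matrix.conjTranspose_apply, mul_comm, Complex.star_def, Complex.mul_conj, Complex.normSq_eq_norm_sq]
      simp [← Complex.ofReal_pow]
    rw [Finset.sum_comm, ← e3, e1]
    refine Finset.sum_congr rfl fun i _ => ?_
    rw [e0]
    simp
  have hnn : 0 ≤ traceNorm A := by
    rw [h1]; exact Finset.sum_nonneg fun i _ => hμ0 i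
  refine ⟨hnn, fun i j => ?_, ?_⟩
  · have hb : ‖A i j‖ ^ 2 ≤ (traceNorm A) ^ 2 := by
      have t1 : ‖A i j‖ ^ 2 ≤ ∑ i, ∑ j, ‖A i j‖ ^ 2 := by
        calc ‖A i j‖ ^ 2 ≤ ∑ j, ‖A i j‖ ^ 2 :=
              Finset.single_le_sum (fun k _ => sq_nonneg ‖A i k‖) (Finset.mem_univ j)
          _ ≤ ∑ i, ∑ j, ‖A i j‖ ^ 2 :=
              Finset.single_le_sum (f := fun i => ∑ j, ‖A i j‖ ^ 2)
                (fun k _ => Finset.sum_nonneg fun l _ => sq_nonneg _) (Finset.mem_univ i)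
      have t2 : ∑ i, (μ i) ^ 2 ≤ (∑ i, μ i) ^ 2 :=
        Finset.sum_sq_le_sq_sum_of_nonneg fun i _ => hμ0 i
      rw [h1]; rw [← h2] at t1; exact t1.trans t2
    nlinarith [norm_nonneg (A i j), hnn]
  · rw [h1, ← h2]
    have := sq_sum_le_card_mul_sum_sq (s := (Finset.univ : Finset n)) (f := μ)
    simpa using this

lemma tendsto_entries {ρ : ℕ → Matrix n n ℂ} {ρ₀ : Matrix n n ℂ}
    (h : Filter.Tendsto (fun k => traceNorm (ρ k - ρ₀)) Filter.atTop (nhds 0)) :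
    Filter.Tendsto ρ Filter.atTop (nhds ρ₀) := by
  refine tendsto_pi_nhds.2 fun i => ?_
  rw [tendsto_pi_nhds]
  intro j
  rw [tendsto_iff_norm_sub_tendsto_zero]
  apply squeeze_zero (fun k => norm_nonneg _) (fun k => ?_) h
  have := (traceNorm_key (ρ k - ρ₀)).2.1 i j
  simpa [Matrix.sub_apply] using this

lemma traceNorm_tendsto_zero {Y : ℕ → Matrix n n ℂ}
    (h : Filter.Tendsto Y Filter.atTop (nhds 0)) :
    Filter.Tendsto (fun k => traceNorm (Y k)) Filter.atTop (nhds 0) := by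
  have hent : ∀ i j, Filter.Tendsto (fun k => Y k i j) Filter.atTop (nhds 0) := by
    intro i j
    have := (tendsto_pi_nhds.1 ((tendsto_pi_nhds.1 h) i)) j
    simpa using this
  have hsum : Filter.Tendsto
      (fun k => ((Fintype.card n : ℝ)) * ∑ i, ∑ j, ‖Y k i j‖ ^ 2) Filter.atTop (nhds 0) := by
    have : Filter.Tendsto (fun k => ∑ i, ∑ j, ‖Y k i j‖ ^ 2) Filter.atTop (nhds 0) := by
      have h0 : (0 : ℝ) = ∑ i : n, ∑ j : n, (0 : ℝ) := by simp
      rw [h0]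
      apply tendsto_finset_sum
      intro i _
      apply tendsto_finset_sum
      intro j _
      have hn : Filter.Tendsto (fun k => ‖Y k i j‖) Filter.atTop (nhds 0) := by
        simpa using (hent i j).norm
      simpa using hn.pow 2
    simpa using this.const_mul ((Fintype.card n : ℝ))
  have hsqrt := (Real.continuous_sqrt.tendsto 0).comp hsum
  rw [Real.sqrt_zero] at hsqrt
  apply squeeze_zero (fun k => (traceNorm_key (Y k)).1) (fun k => ?_) hsqrt
  have hk := (traceNorm_key (Y k)).2.2
  have hynn : (0:ℝ) ≤ (Fintype.card n : ℝ) * ∑ i, ∑ j, ‖Y k i j‖ ^ 2 := by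
    positivity
  exact (Real.le_sqrt (traceNorm_key (Y k)).1 hynn).2 hk

end Stmt19

namespace Stmt19
open Filter Topology Polynomial
variable {n : Type*} [Fintype n] [DecidableEq n]

lemma tendsto_herm {f : ℝ → ℝ} (hf : Continuous f)
    {ρ : ℕ → Matrix n n ℂ} {ρ₀ : Matrix n n ℂ}
    (hH : ∀ k, (ρ k).IsHermitian) (hH₀ : ρ₀.IsHermitian)
    (hev : ∀ k i, (hH k).eigenvalues i ∈ Set.Icc (0:ℝ) 1)
    (hev₀ : ∀ i, hH₀.eigenvalues i ∈ Set.Icc (0:ℝ) 1)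
    (hlim : Tendsto ρ atTop (𝓝 ρ₀)) :
    Tendsto (fun k => herm (hH k) f) atTop (𝓝 (herm hH₀ f)) := by
  refine tendsto_pi_nhds.2 fun i => ?_
  rw [tendsto_pi_nhds]; intro j
  rw [Metric.tendsto_atTop]
  intro ε hε
  obtain ⟨p, hp⟩ := exists_polynomial_near_of_continuousOn 0 1 f hf.continuousOn
    (ε/3) (by linarith)
  have hcont : Tendsto (fun k => (Polynomial.aeval (ρ k) p) i j) atTop
      (𝓝 ((Polynomial.aeval ρ₀ p) i j)) := by
    have h1 : Continuous fun M : Matrix n n ℂ => (Polynomial.aeval M p) i j :=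
      (continuous_apply j).comp ((continuous_apply i).comp p.continuous_aeval)
    exact (h1.tendsto ρ₀).comp hlim
  rw [Metric.tendsto_atTop] at hcont
  obtain ⟨N, hN⟩ := hcont (ε/3) (by linarith)
  refine ⟨N, fun k hk => ?_⟩
  have hNk := hN k hk
  rw [dist_eq_norm] at hNk ⊢
  have key : ∀ (B : Matrix n n ℂ) (hB : B.IsHermitian),
      (∀ l, hB.eigenvalues l ∈ Set.Icc (0:ℝ) 1) →
      ‖(Polynomial.aeval B p) i j - herm hB f i j‖ ≤ ε/3 := by
    intro B hB hevB
    rw [aeval_eq hB]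
    have hsub : (herm hB fun x => p.eval x) i j - herm hB f i j
        = herm hB (fun x => p.eval x - f x) i j := by
      rw [← Matrix.sub_apply, herm_sub hB]
    rw [hsub]
    apply herm_entry_le hB _ (ε/3) (fun l => (hp _ (hevB l)).le)
  have e : herm (hH k) f i j - herm hH₀ f i j
      = -((Polynomial.aeval (ρ k) p) i j - herm (hH k) f i j)
        + ((Polynomial.aeval (ρ k) p) i j - (Polynomial.aeval ρ₀ p) i j)
        + ((Polynomial.aeval ρ₀ p) i j - herm hH₀ f i j) := by ring
  rw [e]
  calc ‖_ + _ + _‖ ≤ ‖-((Polynomial.aeval (ρ k) p) i j - herm (hH k) f i j)‖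
        + ‖(Polynomial.aeval (ρ k) p) i j - (Polynomial.aeval ρ₀ p) i j‖
        + ‖(Polynomial.aeval ρ₀ p) i j - herm hH₀ f i j‖ := norm_add₃_le
    _ < ε := by
        rw [norm_neg]
        have k1 := key (ρ k) (hH k) (hev k)
        have k2 := key ρ₀ hH₀ hev₀
        linarith

lemma tendsto_herm_trace {f : ℝ → ℝ} (hf : Continuous f)
    {ρ : ℕ → Matrix n n ℂ} {ρ₀ : Matrix n n ℂ}
    (hH : ∀ k, (ρ k).IsHermitian) (hH₀ : ρ₀.IsHermitian)
    (hev : ∀ k i, (hH k).eigenvalues i ∈ Set.Icc (0:ℝ) 1)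
    (hev₀ : ∀ i, hH₀.eigenvalues i ∈ Set.Icc (0:ℝ) 1)
    (hlim : Tendsto ρ atTop (𝓝 ρ₀)) :
    Tendsto (fun k => ∑ i, f ((hH k).eigenvalues i)) atTop
      (𝓝 (∑ i, f (hH₀.eigenvalues i))) := by
  have h := tendsto_herm hf hH hH₀ hev hev₀ hlim
  have hcont : Continuous fun M : Matrix n n ℂ => M.trace.re := by
    apply Complex.continuous_re.comp
    unfold Matrix.trace
    exact continuous_finset_sum _ fun i _ =>
      (continuous_apply i).comp (continuous_apply i)
  have h2 := (hcont.tendsto _).comp h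
  have e : ∀ (B : Matrix n n ℂ) (hB : B.IsHermitian),
      (herm hB f).trace.re = ∑ i, f (hB.eigenvalues i) := by
    intro B hB
    rw [herm_trace, Complex.re_sum]
    simp
  have : ((fun M : Matrix n n ℂ => M.trace.re) ∘ fun k => herm (hH k) f)
      = fun k => ∑ i, f ((hH k).eigenvalues i) := by
    funext k
    exact e _ (hH k)
  rw [this, e _ hH₀] at h2
  exact h2

end Stmt19

namespace Stmt19
open Filter Topology
variable {n : Type*} [Fintype n] [DecidableEq n]

lemma state_eig_sum {A : Matrix n n ℂ} (hA : A.PosSemidef) (htr : A.trace = 1) :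
    ∑ j, hA.isHermitian.eigenvalues j = 1 := by
  have h := congrArg (fun M : Matrix n n ℂ => M.trace.re) hA.isHermitian.spectral_theorem
  simp only [Unitary.conjStarAlgAut_apply, Unitary.coe_star] at h
  rw [trace_conjDiag hA.isHermitian.eigenvectorUnitary.2, Complex.re_sum, htr] at h
  simpa [Function.comp] using h.symm

lemma state_eig_mem {A : Matrix n n ℂ} (hA : A.PosSemidef) (htr : A.trace = 1) (i : n) :
    hA.isHermitian.eigenvalues i ∈ Set.Icc (0:ℝ) 1 := by
  have h0 : ∀ j, 0 ≤ hA.isHermitian.eigenvalues j := fun j => hA.eigenvalues_nonneg j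
  have hsum := state_eig_sum hA htr
  refine ⟨h0 i, ?_⟩
  rw [← hsum]
  exact Finset.single_le_sum (fun j _ => h0 j) (Finset.mem_univ i)

lemma specProjAbove_eq_herm {A : Matrix n n ℂ} (hA : A.IsHermitian) (a : ℝ)
    {f : ℝ → ℝ} (hf : ∀ i, f (hA.eigenvalues i) = if a < hA.eigenvalues i then 1 else 0) :
    specProjAbove hA a = herm hA f := by
  unfold specProjAbove herm
  have h : (fun i => if a < hA.eigenvalues i then (1:ℂ) else 0)
      = fun i => ((f (hA.eigenvalues i) : ℝ) : ℂ) := by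
    funext i
    rw [hf i]
    split <;> simp
  rw [h]

end Stmt19

open Stmt19 in
/-- If `ρ₀` has a spectral gap at level `m` (so its spectral projector `P` onto the `m` largest
eigenvalues is well defined) and `ρₖ → ρ₀` in trace norm, then the truncations
`P_m^{ρₖ} ρₖ` converge to `P ρ₀` in trace norm. -/
theorem stmt_19 {d : ℕ} (ρ : ℕ → Matrix (Fin d) (Fin d) ℂ) (ρ₀ : Matrix (Fin d) (Fin d) ℂ)
    (hρ : ∀ k, (ρ k).PosSemidef ∧ (ρ k).trace = 1)
    (hρ₀ : ρ₀.PosSemidef) (htr₀ : ρ₀.trace = 1)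
    (m : ℕ) (P : Matrix (Fin d) (Fin d) ℂ)
    (hP : IsTopSpectralProj hρ₀.isHermitian m P)
    (hlim : Tendsto (fun k => traceNorm (ρ k - ρ₀)) atTop (𝓝 0))
    (Q : ℕ → Matrix (Fin d) (Fin d) ℂ)
    (hQ : ∀ k, IsTopSpectralProj (hρ k).1.isHermitian m (Q k)) :
    Tendsto (fun k => traceNorm (Q k * ρ k - P * ρ₀)) atTop (𝓝 0) := by
  classical
  have hd : Nonempty (Fin d) := by
    by_contra h
    rw [not_nonempty_iff] at h
    have h0 : ρ₀.trace = 0 := by simp [Matrix.trace]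
    rw [htr₀] at h0
    exact one_ne_zero h0
  obtain ⟨a₀, ha₀ne, ha₀card, hPdef⟩ := hP
  set lam₀ := hρ₀.isHermitian.eigenvalues with hl0
  have hex : ∀ i, 0 < |lam₀ i - a₀| := fun i => abs_pos.2 (sub_ne_zero.2 (ha₀ne i))
  set s := Finset.univ.inf' Finset.univ_nonempty (fun i => |lam₀ i - a₀|) with hs
  have hspos : 0 < s := by
    rw [hs, Finset.lt_inf'_iff]
    exact fun i _ => hex i
  set δ := s / 3 with hδdef
  have hδ : 0 < δ := div_pos hspos (by norm_num)
  have hsle : ∀ i, s ≤ |lam₀ i - a₀| := fun i => Finset.inf'_le _ (Finset.mem_univ i)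
  have hsep : ∀ i, 2 * δ < |lam₀ i - a₀| := by
    intro i
    have h := hsle i
    rw [hδdef]
    linarith
  set f : ℝ → ℝ := fun x => min 1 (max 0 ((x - (a₀ - δ)) / (2 * δ))) with hfdef
  have hfc : Continuous f :=
    continuous_const.min (continuous_const.max
      ((continuous_id.sub continuous_const).div_const _))
  have hf0 : ∀ x, x ≤ a₀ - δ → f x = 0 := by
    intro x hx
    have h1 : (x - (a₀ - δ)) / (2 * δ) ≤ 0 :=
      div_nonpos_of_nonpos_of_nonneg (by linarith) (by linarith)
    simp only [hfdef]
    rw [max_eq_left h1, min_eq_right (by norm_num)]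
  have hf1 : ∀ x, a₀ + δ ≤ x → f x = 1 := by
    intro x hx
    have h1 : (1:ℝ) ≤ (x - (a₀ - δ)) / (2 * δ) := by
      rw [le_div_iff₀ (by linarith)]
      linarith
    simp only [hfdef]
    rw [max_eq_right (by linarith), min_eq_left h1]
  set g : ℝ → ℝ := fun x => max 0 (1 - |x - a₀| / (2 * δ)) with hgdef
  have hgc : Continuous g :=
    continuous_const.max (continuous_const.sub
      (((continuous_id.sub continuous_const).abs).div_const _))
  have hg0 : ∀ x, 2 * δ ≤ |x - a₀| → g x = 0 := by
    intro x hx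
    have h1 : (1:ℝ) ≤ |x - a₀| / (2 * δ) := by
      rw [le_div_iff₀ (by linarith)]
      linarith
    simp only [hgdef]
    rw [max_eq_left (by linarith)]
  have hghalf : ∀ x, |x - a₀| ≤ δ → 1 / 2 ≤ g x := by
    intro x hx
    have h1 : |x - a₀| / (2 * δ) ≤ 1 / 2 := by
      rw [div_le_iff₀ (by linarith)]
      linarith
    simp only [hgdef]
    rw [max_eq_right (by linarith)]
    linarith
  have hgnn : ∀ x, 0 ≤ g x := fun x => le_max_left _ _
  have hherm : ∀ k, (ρ k).IsHermitian := fun k => (hρ k).1.isHermitian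
  have hev : ∀ k i, ((hρ k).1.isHermitian).eigenvalues i ∈ Set.Icc (0:ℝ) 1 :=
    fun k => state_eig_mem (hρ k).1 (hρ k).2
  have hev₀ : ∀ i, lam₀ i ∈ Set.Icc (0:ℝ) 1 := state_eig_mem hρ₀ htr₀
  have hρlim : Tendsto ρ atTop (𝓝 ρ₀) := tendsto_entries hlim
  -- indicator description of f at the eigenvalues of ρ₀
  have hf₀ind : ∀ i, f (lam₀ i) = if a₀ < lam₀ i then 1 else 0 := by
    intro i
    rcases lt_or_ge a₀ (lam₀ i) with h | h
    · rw [if_pos h]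
      apply hf1
      have := hsep i
      rw [abs_of_pos (by linarith)] at this
      linarith
    · rw [if_neg (not_lt.2 h)]
      apply hf0
      have := hsep i
      rcases eq_or_lt_of_le h with heq | h2
      · exact absurd heq (ha₀ne i)
      · rw [abs_of_neg (by linarith)] at this
        linarith
  -- P = herm hρ₀.isHermitian f
  have hPherm : P = herm hρ₀.isHermitian f := by
    rw [hPdef]
    exact specProjAbove_eq_herm hρ₀.isHermitian a₀ hf₀ind
  -- trace limits
  have hg₀ : ∑ i, g (lam₀ i) = 0 := by
    apply Finset.sum_eq_zero
    intro i _
    exact hg0 _ (le_of_lt (hsep i))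
  have hgt := tendsto_herm_trace hgc hherm hρ₀.isHermitian hev hev₀ hρlim
  rw [hg₀] at hgt
  have hf₀sum : ∑ i, f (lam₀ i) = (m : ℝ) := by
    rw [Finset.sum_congr rfl fun i _ => hf₀ind i, Finset.sum_boole, ← ha₀card]
  have hft := tendsto_herm_trace hfc hherm hρ₀.isHermitian hev hev₀ hρlim
  rw [hf₀sum] at hft
  -- eventually statements
  have E1 : ∀ᶠ k in atTop, ∑ i, g (((hρ k).1.isHermitian).eigenvalues i) < 1 / 2 :=
    hgt.eventually (eventually_lt_nhds (by norm_num))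
  have E2 : ∀ᶠ k in atTop,
      |(∑ i, f (((hρ k).1.isHermitian).eigenvalues i)) - (m : ℝ)| < 1 / 2 := by
    have h := Metric.tendsto_atTop.1 hft (1/2) (by norm_num)
    obtain ⟨N, hN⟩ := h
    rw [Filter.eventually_atTop]
    exact ⟨N, fun k hk => by simpa [Real.dist_eq] using hN k hk⟩
  -- eventually Q k = herm _ f
  have EQ : ∀ᶠ k in atTop, Q k = herm ((hρ k).1.isHermitian) f := by
    filter_upwards [E1, E2] with k h1 h2
    set lamk := ((hρ k).1.isHermitian).eigenvalues with hlk
    have hband : ∀ i, δ < |lamk i - a₀| := by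
      intro i
      by_contra hcon
      push_neg at hcon
      have hge : (1:ℝ)/2 ≤ ∑ i, g (lamk i) := by
        calc (1:ℝ)/2 ≤ g (lamk i) := hghalf _ hcon
          _ ≤ ∑ i, g (lamk i) :=
            Finset.single_le_sum (fun j _ => hgnn _) (Finset.mem_univ i)
      linarith
    have hfind : ∀ i, f (lamk i) = if a₀ < lamk i then 1 else 0 := by
      intro i
      rcases lt_or_ge a₀ (lamk i) with h | h
      · rw [if_pos h]
        apply hf1
        have := hband i
        rw [abs_of_pos (by linarith)] at this
        linarith
      · rw [if_neg (not_lt.2 h)]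
        apply hf0
        have := hband i
        rcases eq_or_lt_of_le h with heq | h2
        · rw [heq, sub_self, abs_zero] at this
          linarith
        · rw [abs_of_neg (by linarith)] at this
          linarith
    -- card of filter at a₀ equals m
    have hsum : ∑ i, f (lamk i)
        = ((Finset.univ.filter fun i => a₀ < lamk i).card : ℝ) := by
      rw [Finset.sum_congr rfl fun i _ => hfind i, Finset.sum_boole]
    have hcard : (Finset.univ.filter fun i => a₀ < lamk i).card = m := by
      set c := (Finset.univ.filter fun i => a₀ < lamk i).card with hc
      rw [hsum] at h2
      by_contra hne
      have h3 : 1 ≤ |(c:ℤ) - (m:ℤ)| := by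
        apply Int.one_le_abs
        apply sub_ne_zero.2
        exact_mod_cast hne
      have h4 : (1:ℝ) ≤ |(c:ℝ) - (m:ℝ)| := by
        have h5 : ((1:ℤ):ℝ) ≤ ((|(c:ℤ) - (m:ℤ)|:ℤ):ℝ) := by exact_mod_cast h3
        push_cast at h5
        simpa using h5
      linarith
    obtain ⟨ak, hkne, hkcard, hQk⟩ := hQ k
    -- sets above ak and a₀ coincide
    have hsets : (Finset.univ.filter fun i => ak < lamk i)
        = (Finset.univ.filter fun i => a₀ < lamk i) := by
      rcases le_total ak a₀ with hle | hle
      · refine (Finset.eq_of_subset_of_card_le ?_ ?_).symm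
        · intro i hi
          rw [Finset.mem_filter] at hi ⊢
          exact ⟨hi.1, lt_of_le_of_lt hle hi.2⟩
        · rw [hkcard, hcard]
      · refine Finset.eq_of_subset_of_card_le ?_ ?_
        · intro i hi
          rw [Finset.mem_filter] at hi ⊢
          exact ⟨hi.1, lt_of_le_of_lt hle hi.2⟩
        · rw [hkcard, hcard]
    have hiff : ∀ i, (ak < lamk i ↔ a₀ < lamk i) := by
      intro i
      constructor
      · intro h
        have : i ∈ Finset.univ.filter fun i => ak < lamk i :=
          Finset.mem_filter.2 ⟨Finset.mem_univ i, h⟩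
        rw [hsets] at this
        exact (Finset.mem_filter.1 this).2
      · intro h
        have : i ∈ Finset.univ.filter fun i => a₀ < lamk i :=
          Finset.mem_filter.2 ⟨Finset.mem_univ i, h⟩
        rw [← hsets] at this
        exact (Finset.mem_filter.1 this).2
    rw [hQk]
    apply specProjAbove_eq_herm
    intro i
    rw [hfind i]
    by_cases h : ak < lamk i
    · rw [if_pos h, if_pos ((hiff i).1 h)]
    · rw [if_neg h, if_neg (fun hc => h ((hiff i).2 hc))]
  -- main convergence
  have hmul : Tendsto (fun k => herm ((hρ k).1.isHermitian) f * ρ k - P * ρ₀) atTop (𝓝 0) := by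
    have h1 := (tendsto_herm hfc hherm hρ₀.isHermitian hev hev₀ hρlim).mul hρlim
    rw [← hPherm] at h1
    have h2 := h1.sub (tendsto_const_nhds (x := P * ρ₀))
    simpa using h2
  have h3 := traceNorm_tendsto_zero hmul
  apply h3.congr'
  filter_upwards [EQ] with k hk
  rw [hk]
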